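/- arXiv:1111.3183 — 4 statements merged into one kernel-verified Lean document; each statement's English description precedes it below -/
import Mathlib

section
/- For any three unit vectors u, v, w ∈ ℂ², one has arccos‖⟨u, v⟩‖ + arccos‖⟨v, w⟩‖ + arccos‖⟨u, w⟩‖ ≤ π. (Equivalently: the pairwise distances between the images of any three points of S³ in the quotient S³/S¹ of the Hopf circle action, which is the round sphere S²(1/2) of radius 1/2 with distance arccos of the modulus of the complex inner product, sum to at most π; in particular the 3-extent of S²(1/2) is at most π/3.) -/

lemma my_arccos_le_arccos {x y : ℝ} (h : x ≤ y) : Real.arccos y ≤ Real.arccos x := by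
  unfold Real.arccos
  have := Real.monotone_arcsin h
  linarith

lemma my_trig_aux {a b c : ℝ} (ha0 : 0 ≤ a) (ha1 : a ≤ 1) (hb0 : 0 ≤ b) (hb1 : b ≤ 1)
    (hc1 : c ≤ 1)
    (key : Real.sqrt (1 - a ^ 2) * Real.sqrt (1 - b ^ 2) ≤ c + a * b) :
    Real.arccos a + Real.arccos b + Real.arccos c ≤ Real.pi := by
  have hA : Real.arccos a ≤ Real.pi / 2 := Real.arccos_le_pi_div_two.2 ha0
  have hB : Real.arccos b ≤ Real.pi / 2 := Real.arccos_le_pi_div_two.2 hb0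
  have hA0 := Real.arccos_nonneg a
  have hB0 := Real.arccos_nonneg b
  have hAB : Real.arccos a + Real.arccos b ≤ Real.pi := by linarith
  have hcos : Real.cos (Real.arccos a + Real.arccos b)
      = a * b - Real.sqrt (1 - a ^ 2) * Real.sqrt (1 - b ^ 2) := by
    rw [Real.cos_add, Real.cos_arccos (by linarith) ha1, Real.cos_arccos (by linarith) hb1,
      Real.sin_arccos, Real.sin_arccos]
  have h1 : -c ≤ Real.cos (Real.arccos a + Real.arccos b) := by rw [hcos]; linarith
  have h2 : Real.arccos a + Real.arccos b ≤ Real.arccos (-c) := by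
    have h3 := my_arccos_le_arccos h1
    rwa [Real.arccos_cos (by linarith) hAB] at h3
  rw [Real.arccos_neg] at h2
  linarith

/-- For any three unit vectors `u, v, w ∈ ℂ²`,
`arccos ‖⟪u, v⟫‖ + arccos ‖⟪v, w⟫‖ + arccos ‖⟪u, w⟫‖ ≤ π`.  Equivalently, the pairwise distances
between the images of any three points of `S³` in the quotient `S³/S¹` of the Hopf action (the
round sphere `S²(1/2)`, with distance `arccos` of the modulus of the complex inner product) sum
to at most `π`; in particular the 3-extent of `S²(1/2)` is at most `π/3`. -/
theorem sum_arccos_abs_inner_le_pi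
    (u v w : EuclideanSpace ℂ (Fin 2)) (hu : ‖u‖ = 1) (hv : ‖v‖ = 1) (hw : ‖w‖ = 1) :
    Real.arccos ‖(inner ℂ u v : ℂ)‖ + Real.arccos ‖(inner ℂ v w : ℂ)‖ +
      Real.arccos ‖(inner ℂ u w : ℂ)‖ ≤ Real.pi := by
  have ha1 : ‖(inner ℂ u v : ℂ)‖ ≤ 1 := by
    have := norm_inner_le_norm (𝕜 := ℂ) u v; rw [hu, hv] at this; simpa using this
  have hb1 : ‖(inner ℂ v w : ℂ)‖ ≤ 1 := by
    have := norm_inner_le_norm (𝕜 := ℂ) v w; rw [hv, hw] at this; simpa using this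
  have hc1 : ‖(inner ℂ u w : ℂ)‖ ≤ 1 := by
    have := norm_inner_le_norm (𝕜 := ℂ) u w; rw [hu, hw] at this; simpa using this
  have expand : ∀ x y : EuclideanSpace ℂ (Fin 2),
      (inner ℂ x y : ℂ) = (starRingEnd ℂ) (x 0) * y 0 + (starRingEnd ℂ) (x 1) * y 1 := by
    intro x y
    simp [PiLp.inner_apply, Fin.sum_univ_two, mul_comm]
  have huu : (starRingEnd ℂ) (u 0) * u 0 + (starRingEnd ℂ) (u 1) * u 1 = 1 := by
    rw [← expand, inner_self_eq_norm_sq_to_K, hu]; norm_num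
  have hvv : (starRingEnd ℂ) (v 0) * v 0 + (starRingEnd ℂ) (v 1) * v 1 = 1 := by
    rw [← expand, inner_self_eq_norm_sq_to_K, hv]; norm_num
  have hww : (starRingEnd ℂ) (w 0) * w 0 + (starRingEnd ℂ) (w 1) * w 1 = 1 := by
    rw [← expand, inner_self_eq_norm_sq_to_K, hw]; norm_num
  set A : ℂ := u 0 * v 1 - u 1 * v 0 with hA
  set B : ℂ := w 0 * v 1 - w 1 * v 0 with hB
  -- key algebraic identity
  have key1 : (inner ℂ u w : ℂ) - (inner ℂ u v : ℂ) * (inner ℂ v w : ℂ) = (starRingEnd ℂ) A * B := by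
    rw [expand u w, expand u v, expand v w, hA, hB]
    simp only [map_sub, map_mul]
    linear_combination (-((starRingEnd ℂ) (u 0) * w 0 + (starRingEnd ℂ) (u 1) * w 1)) * hvv
  have normA : ‖A‖ ^ 2 = 1 - ‖(inner ℂ u v : ℂ)‖ ^ 2 := by
    have h : A * (starRingEnd ℂ) A = 1 - (inner ℂ u v : ℂ) * (starRingEnd ℂ) (inner ℂ u v : ℂ) := by
      rw [expand u v, hA]
      simp only [map_sub, map_mul, map_add, Complex.conj_conj]
      linear_combination ((starRingEnd ℂ) (u 0) * u 0 + (starRingEnd ℂ) (u 1) * u 1) * hvv + huu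
    rw [Complex.mul_conj, Complex.mul_conj] at h
    have h2 : (Complex.normSq A : ℝ) = 1 - Complex.normSq (inner ℂ u v : ℂ) := by exact_mod_cast h
    rw [Complex.sq_norm, Complex.sq_norm]
    exact h2
  have normB : ‖B‖ ^ 2 = 1 - ‖(inner ℂ v w : ℂ)‖ ^ 2 := by
    have h : B * (starRingEnd ℂ) B = 1 - (inner ℂ v w : ℂ) * (starRingEnd ℂ) (inner ℂ v w : ℂ) := by
      rw [expand v w, hB]
      simp only [map_sub, map_mul, map_add, Complex.conj_conj]
      linear_combination ((starRingEnd ℂ) (w 0) * w 0 + (starRingEnd ℂ) (w 1) * w 1) * hvv + hww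
    rw [Complex.mul_conj, Complex.mul_conj] at h
    have h2 : (Complex.normSq B : ℝ) = 1 - Complex.normSq (inner ℂ v w : ℂ) := by exact_mod_cast h
    rw [Complex.sq_norm, Complex.sq_norm]
    exact h2
  have sqrtA : Real.sqrt (1 - ‖(inner ℂ u v : ℂ)‖ ^ 2) = ‖A‖ := by
    rw [← normA, Real.sqrt_sq (norm_nonneg A)]
  have sqrtB : Real.sqrt (1 - ‖(inner ℂ v w : ℂ)‖ ^ 2) = ‖B‖ := by
    rw [← normB, Real.sqrt_sq (norm_nonneg B)]
  have key : Real.sqrt (1 - ‖(inner ℂ u v : ℂ)‖ ^ 2) * Real.sqrt (1 - ‖(inner ℂ v w : ℂ)‖ ^ 2)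
      ≤ ‖(inner ℂ u w : ℂ)‖ + ‖(inner ℂ u v : ℂ)‖ * ‖(inner ℂ v w : ℂ)‖ := by
    rw [sqrtA, sqrtB]
    calc ‖A‖ * ‖B‖ = ‖(starRingEnd ℂ) A * B‖ := by
            rw [norm_mul, RCLike.norm_conj]
      _ = ‖(inner ℂ u w : ℂ) - (inner ℂ u v : ℂ) * (inner ℂ v w : ℂ)‖ := by rw [key1]
      _ ≤ ‖(inner ℂ u w : ℂ)‖ + ‖(inner ℂ u v : ℂ) * (inner ℂ v w : ℂ)‖ := norm_sub_le _ _
      _ = ‖(inner ℂ u w : ℂ)‖ + ‖(inner ℂ u v : ℂ)‖ * ‖(inner ℂ v w : ℂ)‖ := by rw [norm_mul]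
  exact my_trig_aux (norm_nonneg _) ha1 (norm_nonneg _) hb1 hc1 key
end

section
/- Consider sums of pairwise angles of triples of unit vectors in ℝ³: the set of real numbers of the form arccos⟨x, y⟩ + arccos⟨y, z⟩ + arccos⟨x, z⟩, where x, y, z range over unit vectors of the Euclidean space ℝ³, has greatest element 2π. In particular, for any three unit vectors in ℝ³ the sum of the three pairwise angles is at most 2π, and the value 2π is attained. (Equivalently: any three points on the round sphere S²(1/2) of radius 1/2 have pairwise geodesic distances summing to at most π, and π is attained; i.e. the 3-extent of S²(1/2) equals π/3.) -/
open Real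

/-- Triangle inequality for angles between unit vectors. -/
lemma arccos_inner_triangle {E : Type*} [NormedAddCommGroup E] [InnerProductSpace ℝ E]
    {x y z : E} (hx : ‖x‖ = 1) (hy : ‖y‖ = 1) (hz : ‖z‖ = 1) :
    Real.arccos (inner ℝ x z : ℝ) ≤ Real.arccos (inner ℝ x y : ℝ) + Real.arccos (inner ℝ y z : ℝ) := by
  set a : ℝ := inner ℝ x y with ha
  set b : ℝ := inner ℝ y z with hb
  set c : ℝ := inner ℝ x z with hc
  have bd : ∀ u v : E, ‖u‖ = 1 → ‖v‖ = 1 → |(inner ℝ u v : ℝ)| ≤ 1 := by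
    intro u v hu hv
    have := abs_real_inner_le_norm u v
    rwa [hu, hv, mul_one] at this
  have ha1 : |a| ≤ 1 := bd x y hx hy
  have hb1 : |b| ≤ 1 := bd y z hy hz
  have hy2 : (inner ℝ y y : ℝ) = 1 := by
    rw [real_inner_self_eq_norm_sq, hy]; norm_num
  have hzy : (inner ℝ z y : ℝ) = b := by rw [real_inner_comm]
  -- key: a*b - c ≤ √(1-a²) * √(1-b²)
  have key : a * b - c ≤ Real.sqrt (1 - a ^ 2) * Real.sqrt (1 - b ^ 2) := by
    have hCS := abs_real_inner_le_norm (x - a • y) (z - b • y)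
    have hinner : (inner ℝ (x - a • y) (z - b • y) : ℝ) = c - a * b := by
      simp only [inner_sub_left, inner_sub_right, real_inner_smul_left,
        real_inner_smul_right, hy2, ← ha, ← hb, ← hc]
      ring
    have hx2 : ‖x - a • y‖ ^ 2 = 1 - a ^ 2 := by
      rw [norm_sub_sq_real, real_inner_smul_right, ← ha, hx, norm_smul, hy,
        mul_one, Real.norm_eq_abs, sq_abs]
      ring
    have hz2 : ‖z - b • y‖ ^ 2 = 1 - b ^ 2 := by
      rw [norm_sub_sq_real, real_inner_smul_right, hzy, hz, norm_smul, hy,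
        mul_one, Real.norm_eq_abs, sq_abs]
      ring
    have hnx : ‖x - a • y‖ = Real.sqrt (1 - a ^ 2) := by
      rw [← hx2, Real.sqrt_sq (norm_nonneg _)]
    have hnz : ‖z - b • y‖ = Real.sqrt (1 - b ^ 2) := by
      rw [← hz2, Real.sqrt_sq (norm_nonneg _)]
    rw [hinner, hnx, hnz] at hCS
    calc a * b - c ≤ |c - a * b| := by rw [abs_sub_comm]; exact le_abs_self _
      _ ≤ _ := hCS
  have anti : ∀ s t : ℝ, s ≤ t → Real.arccos t ≤ Real.arccos s := by
    intro s t h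
    simp only [Real.arccos_eq_pi_div_two_sub_arcsin]
    linarith [Real.monotone_arcsin h]
  by_cases hsum : Real.arccos a + Real.arccos b ≤ π
  · have hcos : Real.cos (Real.arccos a + Real.arccos b) ≤ c := by
      rw [Real.cos_add, Real.cos_arccos (neg_le_of_abs_le ha1) (le_of_abs_le ha1),
        Real.cos_arccos (neg_le_of_abs_le hb1) (le_of_abs_le hb1),
        Real.sin_arccos, Real.sin_arccos]
      linarith [key]
    calc Real.arccos c ≤ Real.arccos (Real.cos (Real.arccos a + Real.arccos b)) :=
          anti _ _ hcos
      _ = Real.arccos a + Real.arccos b :=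
          Real.arccos_cos (add_nonneg (Real.arccos_nonneg a) (Real.arccos_nonneg b)) hsum
  · exact le_trans (Real.arccos_le_pi c) (le_of_not_ge hsum)

/-- The set of sums of pairwise angles of triples of unit vectors in `ℝ³`,
i.e. real numbers of the form `arccos ⟪x, y⟫ + arccos ⟪y, z⟫ + arccos ⟪x, z⟫` with `x, y, z` unit
vectors of `ℝ³`, has greatest element `2π`.  In particular any three unit vectors in `ℝ³` have
pairwise angles summing to at most `2π`, and `2π` is attained.  (Equivalently: any three points of
the round sphere `S²(1/2)` have pairwise geodesic distances summing to at most `π`, and `π` is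
attained; the 3-extent of `S²(1/2)` equals `π/3`.) -/
theorem isGreatest_sum_angles_unit_vectors :
    IsGreatest {s : ℝ | ∃ x y z : EuclideanSpace ℝ (Fin 3), ‖x‖ = 1 ∧ ‖y‖ = 1 ∧ ‖z‖ = 1 ∧
        s = Real.arccos (inner ℝ x y : ℝ) + Real.arccos (inner ℝ y z : ℝ) +
          Real.arccos (inner ℝ x z : ℝ)}
      (2 * Real.pi) := by
  constructor
  · refine ⟨EuclideanSpace.single 0 1, -EuclideanSpace.single 0 1, EuclideanSpace.single 0 1,
      ?_, ?_, ?_, ?_⟩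
    · simp [EuclideanSpace.norm_single]
    · simp [EuclideanSpace.norm_single]
    · simp [EuclideanSpace.norm_single]
    · have h1 : ‖(EuclideanSpace.single 0 1 : EuclideanSpace ℝ (Fin 3))‖ = 1 := by
        simp [EuclideanSpace.norm_single]
      have hself : (inner ℝ (EuclideanSpace.single 0 1 : EuclideanSpace ℝ (Fin 3))
          (EuclideanSpace.single 0 1) : ℝ) = 1 := by
        rw [real_inner_self_eq_norm_sq, h1]; norm_num
      rw [inner_neg_right, inner_neg_left, hself]
      rw [Real.arccos_neg_one, Real.arccos_one]
      ring
  · rintro s ⟨x, y, z, hx, hy, hz, rfl⟩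
    have hny : ‖-y‖ = 1 := by rwa [norm_neg]
    have h := arccos_inner_triangle hx hny hz (z := z)
    rw [inner_neg_right, inner_neg_left, Real.arccos_neg, Real.arccos_neg] at h
    linarith
end

section
/- Rigidity of the extent bound on the sphere: if x, y, z are unit vectors in ℝ³ with arccos⟨x, y⟩ + arccos⟨y, z⟩ + arccos⟨x, z⟩ = 2π, then x, y, z are linearly dependent, i.e. they lie on a common great circle of the unit sphere S². -/
/-- rigidity of the extent bound on the sphere.  If `x, y, z` are unit vectors
in `ℝ³` whose pairwise angles sum to `2π`, i.e.
`arccos ⟪x, y⟫ + arccos ⟪y, z⟫ + arccos ⟪x, z⟫ = 2π`, then `x, y, z` are linearly dependent;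
equivalently, they lie on a common great circle of the unit sphere `S²`. -/
theorem linearDependent_of_sum_angles_eq_two_pi
    (x y z : EuclideanSpace ℝ (Fin 3)) (hx : ‖x‖ = 1) (hy : ‖y‖ = 1) (hz : ‖z‖ = 1)
    (hsum : Real.arccos (inner ℝ x y : ℝ) + Real.arccos (inner ℝ y z : ℝ) +
      Real.arccos (inner ℝ x z : ℝ) = 2 * Real.pi) :
    ¬ LinearIndependent ℝ ![x, y, z] := by
  intro hli
  set a : ℝ := inner ℝ x y with ha
  set c : ℝ := inner ℝ y z with hc
  set b : ℝ := inner ℝ x z with hb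
  -- bounds
  have hab : |a| ≤ 1 := by
    have := abs_real_inner_le_norm x y; rwa [hx, hy, one_mul] at this
  have hcb : |c| ≤ 1 := by
    have := abs_real_inner_le_norm y z; rwa [hy, hz, one_mul] at this
  have hbb : |b| ≤ 1 := by
    have := abs_real_inner_le_norm x z; rwa [hx, hz, one_mul] at this
  have ha1 := abs_le.1 hab
  have hc1 := abs_le.1 hcb
  have hb1 := abs_le.1 hbb
  have hca : Real.cos (Real.arccos a) = a := Real.cos_arccos ha1.1 ha1.2
  have hcc : Real.cos (Real.arccos c) = c := Real.cos_arccos hc1.1 hc1.2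
  have hcbv : Real.cos (Real.arccos b) = b := Real.cos_arccos hb1.1 hb1.2
  set α := Real.arccos a
  set γ := Real.arccos c
  set β := Real.arccos b
  have hβ : β = 2 * Real.pi - α - γ := by linarith
  have hbval : b = Real.cos α * Real.cos γ - Real.sin α * Real.sin γ := by
    rw [← hcbv, hβ]
    rw [show 2 * Real.pi - α - γ = 2 * Real.pi - (α + γ) by ring,
      Real.cos_two_pi_sub, Real.cos_add]
  -- the Gram matrix
  set M : Matrix (Fin 3) (Fin 3) ℝ := Matrix.of ![(fun i => x i), (fun i => y i), (fun i => z i)] with hM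
  have hli' : LinearIndependent ℝ (fun i => M i) := by
    have : (fun i => M i) = ![(fun i => x i), (fun i => y i), (fun i => z i)] := by
      ext i; fin_cases i <;> rfl
    rw [this]
    have h2 := hli.map' (WithLp.linearEquiv 2 ℝ (Fin 3 → ℝ)).toLinearMap (LinearEquiv.ker _)
    have e : (⇑(WithLp.linearEquiv 2 ℝ (Fin 3 → ℝ)).toLinearMap ∘ ![x, y, z]) =
        ![(fun i => x i), (fun i => y i), (fun i => z i)] := by
      ext i j; fin_cases i <;> rfl
    rw [e] at h2
    exact h2
  have hunit : IsUnit M := Matrix.linearIndependent_rows_iff_isUnit.mp hli'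
  have hdet : M.det ≠ 0 := by
    simpa [isUnit_iff_ne_zero] using hunit.map (Matrix.detMonoidHom (n := Fin 3) (R := ℝ))
  have hgram : M * M.transpose = !![1, a, b; a, 1, c; b, c, 1] := by
    have hxx : (inner ℝ x x : ℝ) = 1 := by
      rw [real_inner_self_eq_norm_sq, hx]; norm_num
    have hyy : (inner ℝ y y : ℝ) = 1 := by
      rw [real_inner_self_eq_norm_sq, hy]; norm_num
    have hzz : (inner ℝ z z : ℝ) = 1 := by
      rw [real_inner_self_eq_norm_sq, hz]; norm_num
    have hip : ∀ u v : EuclideanSpace ℝ (Fin 3), (inner ℝ u v : ℝ) = ∑ k, u k * v k := by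
      intro u v; rw [PiLp.inner_apply]; simp [real_inner_comm]; exact Finset.sum_congr rfl fun _ _ => mul_comm _ _
    have hd : ∀ u v : EuclideanSpace ℝ (Fin 3),
        u 0 * v 0 + u 1 * v 1 + u 2 * v 2 = (inner ℝ u v : ℝ) := fun u v => by
      rw [hip u v, Fin.sum_univ_three]
    ext i j
    fin_cases i <;> fin_cases j <;>
      simp [Matrix.mul_apply, Matrix.transpose_apply, Matrix.vecHead, Matrix.vecTail, Function.comp, hM, Fin.sum_univ_three] <;>
      rw [hd] <;>
      first
        | exact hxx | exact hyy | exact hzz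
        | exact ha.symm | exact hb.symm | exact hc.symm
        | rw [real_inner_comm]
  have hdetprod : (M * M.transpose).det = M.det * M.det := by
    rw [Matrix.det_mul, Matrix.det_transpose]
  have hdet0 : (!![1, a, b; a, 1, c; b, c, 1] : Matrix (Fin 3) (Fin 3) ℝ).det = 0 := by
    have hs1 : Real.sin α ^ 2 = 1 - a ^ 2 := by
      have := Real.sin_sq_add_cos_sq α; rw [hca] at this; linarith
    have hs2 : Real.sin γ ^ 2 = 1 - c ^ 2 := by
      have := Real.sin_sq_add_cos_sq γ; rw [hcc] at this; linarith
    have h12 : Real.sin α ^ 2 * Real.sin γ ^ 2 = (1 - a ^ 2) * (1 - c ^ 2) := by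
      rw [hs1, hs2]
    have hb2 : b = a * c - Real.sin α * Real.sin γ := by rw [hbval, hca, hcc]
    rw [Matrix.det_fin_three]
    norm_num [Matrix.cons_val_zero, Matrix.cons_val_one, Matrix.head_cons, Matrix.cons_val_two, Matrix.tail_cons]
    linear_combination -h12 + (Real.sin α * Real.sin γ - b + a * c) * hb2
  rw [hgram, hdet0] at hdetprod
  exact hdet (by nlinarith [hdetprod.symm])
end

section
/- Let p, q, r be integers and let the 2-torus T² = Circle × Circle act on ℂ³ by ((s,t), (z₁,z₂,z₃)) ↦ (s·t^p·z₁, s·t^q·z₂, s·t^r·z₃), an action preserving the unit sphere S⁵ ⊂ ℂ³. If p ≠ q, then for any point z = (z₁, z₂, 0) ∈ S⁵ with z₁ ≠ 0 and z₂ ≠ 0, the isotropy subgroup of z equals {(s,t) ∈ T² : s·t^p = 1 and s·t^q = 1} and is a finite cyclic group isomorphic to ℤ/|p − q|. -/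
lemma circle_coe_pow (z : Circle) (m : ℕ) : ((z ^ m : Circle) : ℂ) = (z : ℂ) ^ m :=
  map_pow Circle.coeHom z m

open Subgroup in
lemma isCyclic_zpowers' {G : Type*} [Group G] (g : G) : IsCyclic (zpowers g) := by
  refine ⟨⟨⟨g, mem_zpowers g⟩, fun x => ?_⟩⟩
  obtain ⟨k, hk⟩ := x.2
  exact ⟨k, Subtype.ext (by simpa using hk)⟩

/-- Let `p, q, r` be integers and let the 2-torus `T² = Circle × Circle` act on
`ℂ³` by `((s,t), (z₁,z₂,z₃)) ↦ (s·t^p·z₁, s·t^q·z₂, s·t^r·z₃)`, an action preserving the unit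
sphere `S⁵ ⊂ ℂ³`.  If `p ≠ q`, then for any point `z = (z₁, z₂, 0) ∈ S⁵` with `z₁ ≠ 0` and
`z₂ ≠ 0`, the isotropy subgroup of `z` equals `{(s,t) : s·t^p = 1 ∧ s·t^q = 1}` and is a finite
cyclic group isomorphic to `ℤ/|p − q|`. -/
theorem isotropy_of_weighted_torus_action
    (p q r : ℤ) (hpq : p ≠ q) (z₁ z₂ : ℂ) (hz₁ : z₁ ≠ 0) (hz₂ : z₂ ≠ 0)
    (hsphere : ‖z₁‖ ^ 2 + ‖z₂‖ ^ 2 + ‖(0 : ℂ)‖ ^ 2 = 1) :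
    {g : Circle × Circle |
        ((g.1 * g.2 ^ p : Circle) : ℂ) * z₁ = z₁ ∧
        ((g.1 * g.2 ^ q : Circle) : ℂ) * z₂ = z₂ ∧
        ((g.1 * g.2 ^ r : Circle) : ℂ) * (0 : ℂ) = 0}
      = {g : Circle × Circle | g.1 * g.2 ^ p = 1 ∧ g.1 * g.2 ^ q = 1} ∧
    ∃ K : Subgroup (Circle × Circle),
      (K : Set (Circle × Circle)) = {g : Circle × Circle | g.1 * g.2 ^ p = 1 ∧ g.1 * g.2 ^ q = 1} ∧
      Nonempty (K ≃* Multiplicative (ZMod (p - q).natAbs)) := by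
  constructor
  · ext g
    simp only [Set.mem_setOf_eq]
    constructor
    · rintro ⟨h1, h2, -⟩
      refine ⟨Circle.coe_injective ?_, Circle.coe_injective ?_⟩
      · simpa [hz₁] using (mul_left_eq_self₀.mp h1)
      · simpa [hz₂] using (mul_left_eq_self₀.mp h2)
    · rintro ⟨h1, h2⟩
      refine ⟨by rw [h1]; simp, by rw [h2]; simp, by simp⟩
  · -- cyclic group part
    set n : ℕ := (p - q).natAbs with hn
    have hn0 : n ≠ 0 := by
      simp [hn, Int.natAbs_eq_zero, sub_eq_zero, hpq]
    have hζC : IsPrimitiveRoot (Complex.exp (2 * Real.pi * Complex.I / n)) n :=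
      Complex.isPrimitiveRoot_exp n hn0
    set ζ : Circle := Circle.exp (2 * Real.pi / n) with hζdef
    have hζcoe : (ζ : ℂ) = Complex.exp (2 * Real.pi * Complex.I / n) := by
      rw [hζdef, Circle.coe_exp]
      congr 1
      push_cast
      ring
    -- ζ has order n
    have hζpow : ζ ^ n = 1 := by
      apply Circle.coe_injective
      rw [circle_coe_pow, Circle.coe_one, hζcoe]
      exact hζC.pow_eq_one
    have hζord : orderOf ζ = n := by
      have : orderOf (ζ : ℂ) = n := by rw [hζcoe]; exact hζC.eq_orderOf.symm
      rw [← this]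
      exact (orderOf_injective Circle.coeHom Circle.coe_injective ζ).symm
    -- every element of circle with t^n = 1 is a power of ζ
    have hmem : ∀ t : Circle, t ^ n = 1 → ∃ i : ℕ, ζ ^ i = t := by
      intro t ht
      have ht' : (t : ℂ) ^ n = 1 := by
        rw [← circle_coe_pow, ht, Circle.coe_one]
      haveI : NeZero n := ⟨hn0⟩
      obtain ⟨i, _, hi⟩ := hζC.eq_pow_of_pow_eq_one ht'
      exact ⟨i, Circle.coe_injective (by rw [circle_coe_pow, hζcoe]; exact hi)⟩
    set g : Circle × Circle := (ζ ^ (-p), ζ) with hg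
    have hζzn : ζ ^ (n : ℤ) = 1 := by rw [zpow_natCast]; exact hζpow
    have hζpq : ζ ^ (p - q) = 1 := by
      rcases Int.natAbs_eq (p - q) with h | h
      · rw [h, ← hn]; exact hζzn
      · rw [h, zpow_neg, ← hn, hζzn, inv_one]
    refine ⟨Subgroup.zpowers g, ?_, ?_⟩
    · ext x
      simp only [SetLike.mem_coe, Subgroup.mem_zpowers_iff, Set.mem_setOf_eq]
      constructor
      · rintro ⟨k, rfl⟩
        constructor
        · show (ζ ^ (-p)) ^ k * (ζ ^ k) ^ p = 1
          rw [← zpow_mul, ← zpow_mul, ← zpow_add]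
          ring_nf
          exact zpow_zero ζ
        · show (ζ ^ (-p)) ^ k * (ζ ^ k) ^ q = 1
          rw [← zpow_mul, ← zpow_mul, ← zpow_add]
          have : -p * k + k * q = (p - q) * (-k) := by ring
          rw [this, zpow_mul, hζpq, one_zpow]
      · rintro ⟨h1, h2⟩
        obtain ⟨s, t⟩ := x
        simp only at h1 h2 ⊢
        -- t ^ (p - q) = 1
        have htpq : t ^ (p - q) = 1 := by
          have h3 : t ^ p = t ^ q :=
            (eq_inv_of_mul_eq_one_right h1).trans (eq_inv_of_mul_eq_one_right h2).symm
          rw [zpow_sub, h3, mul_inv_cancel]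
        have htn : t ^ n = 1 := by
          rcases Int.natAbs_eq (p - q) with h | h
          · rw [← zpow_natCast, hn, ← h, htpq]
          · rw [← zpow_natCast]
            have : ((n : ℤ)) = -(p - q) := by rw [hn]; omega
            rw [this, zpow_neg, htpq, inv_one]
        obtain ⟨i, hi⟩ := hmem t htn
        refine ⟨(i : ℤ), ?_⟩
        have hs : s = t ^ (-p) := by
          rw [zpow_neg, eq_inv_iff_mul_eq_one, h1]
        rw [Prod.ext_iff]
        constructor
        · show (ζ ^ (-p)) ^ (i : ℤ) = s
          rw [hs, ← hi, ← zpow_natCast ζ i, ← zpow_mul, ← zpow_mul]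
          ring_nf
        · show ζ ^ (i : ℤ) = t
          rw [← hi, zpow_natCast]
    · -- isomorphism
      haveI : IsCyclic (Subgroup.zpowers g) := isCyclic_zpowers' g
      have hordg : orderOf g = n := by
        apply Nat.dvd_antisymm
        · apply orderOf_dvd_of_pow_eq_one
          rw [Prod.pow_def]
          refine Prod.ext ?_ ?_
          · show (ζ ^ (-p)) ^ n = 1
            rw [← zpow_natCast, ← zpow_mul, mul_comm, zpow_mul, hζzn, one_zpow]
          · exact hζpow
        · rw [← hζord]
          apply orderOf_dvd_of_pow_eq_one
          have : (g ^ orderOf g).2 = 1 := by rw [pow_orderOf_eq_one]; rfl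
          rw [Prod.pow_def] at this
          exact this
      have hcard : Nat.card (Subgroup.zpowers g) = n := by
        rw [Nat.card_zpowers, hordg]
      rw [← hcard]
      exact ⟨(zmodCyclicMulEquiv inferInstance).symm⟩
end
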